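/- Under complete randomization with treated set A of size n_A ≥ 3 out of n ≥ 3 units, for zero-mean sequences x, y, z: E[∑_{(i,j,s) pairwise distinct} T_i T_j T_s x_i y_j z_s] = (2 n_A(n_A−1)(n_A−2)/(n(n−1)(n−2))) ∑_{i=1}^n x_i y_i z_i, where T_k is the indicator of k ∈ A. -/

import Mathlib

open Finset

lemma count_subsets (n m : ℕ) (s : Finset (Fin n)) (hk : s.card ≤ m) :
    ((Finset.powersetCard m (Finset.univ : Finset (Fin n))).filter (fun A => s ⊆ A)).card
      = (n - s.card).choose (m - s.card) := by
  have key : ((Finset.powersetCard m (Finset.univ : Finset (Fin n))).filter (fun A => s ⊆ A)).card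
      = ((Finset.univ \ s).powersetCard (m - s.card)).card := by
    apply Finset.card_bij' (fun A _ => A \ s) (fun C _ => C ∪ s)
    · intro A hA
      simp only [mem_filter, Finset.mem_powersetCard] at hA ⊢
      refine ⟨Finset.sdiff_subset_sdiff (Finset.subset_univ A) le_rfl, ?_⟩
      rw [Finset.card_sdiff_of_subset hA.2, hA.1.2]
    · intro C hC
      simp only [Finset.mem_powersetCard] at hC
      have hdisj : Disjoint C s := Finset.disjoint_of_subset_left hC.1 (Finset.sdiff_disjoint)
      simp only [mem_filter, Finset.mem_powersetCard]
      refine ⟨⟨Finset.subset_univ _, ?_⟩, Finset.subset_union_right⟩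
      rw [Finset.card_union_of_disjoint hdisj, hC.2]
      omega
    · intro A hA
      simp only [mem_filter] at hA
      exact Finset.sdiff_union_of_subset hA.2
    · intro C hC
      simp only [Finset.mem_powersetCard] at hC
      have hdisj : Disjoint C s := Finset.disjoint_of_subset_left hC.1 (Finset.sdiff_disjoint)
      exact Finset.union_sdiff_cancel_right hdisj
  rw [key, Finset.card_powersetCard, Finset.card_sdiff_of_subset (Finset.subset_univ s), Finset.card_univ,
    Fintype.card_fin]

lemma choose_id (a b : ℕ) :
    ((a+3).choose (b+3) : ℤ) * ((b+3)*(b+2)*(b+1)) = (a.choose b : ℤ) * ((a+3)*(a+2)*(a+1)) := by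
  have e1 : ((a:ℤ)+1) * (a.choose b : ℤ) = ((a+1).choose (b+1) : ℤ) * ((b:ℤ)+1) := by
    exact_mod_cast Nat.add_one_mul_choose_eq a b
  have e2 : ((a:ℤ)+2) * ((a+1).choose (b+1) : ℤ) = ((a+2).choose (b+2) : ℤ) * ((b:ℤ)+2) := by
    exact_mod_cast Nat.add_one_mul_choose_eq (a+1) (b+1)
  have e3 : ((a:ℤ)+3) * ((a+2).choose (b+2) : ℤ) = ((a+3).choose (b+3) : ℤ) * ((b:ℤ)+3) := by
    exact_mod_cast Nat.add_one_mul_choose_eq (a+2) (b+2)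
  linear_combination -((b:ℤ)+2)*((b:ℤ)+1)*e3 - ((a:ℤ)+3)*((b:ℤ)+1)*e2 - ((a:ℤ)+3)*((a:ℤ)+2)*e1

/-- `E[∑_{(i,j,s) pairwise distinct in A} x_i y_j z_s]
  = 2 n_A(n_A−1)(n_A−2)/(n(n−1)(n−2)) ∑ x_i y_i z_i` for zero-mean sequences. -/
theorem stmt10 (n nA : ℕ) (hn : 3 ≤ n) (h1 : 3 ≤ nA) (h2 : nA ≤ n)
    (x y z : Fin n → ℝ)
    (hx : ∑ i, x i = 0) (hy : ∑ i, y i = 0) (hz : ∑ i, z i = 0) :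
    (∑ A ∈ Finset.powersetCard nA (Finset.univ : Finset (Fin n)),
        ∑ i ∈ A, ∑ j ∈ A \ {i}, ∑ s ∈ A \ {i, j}, x i * y j * z s) /
      ((Finset.powersetCard nA (Finset.univ : Finset (Fin n))).card : ℝ)
    = (2 * (nA : ℝ) * ((nA : ℝ) - 1) * ((nA : ℝ) - 2) /
          ((n : ℝ) * ((n : ℝ) - 1) * ((n : ℝ) - 2))) *
        ∑ i, x i * y i * z i := by
  set P := Finset.powersetCard nA (Finset.univ : Finset (Fin n)) with hP
  set N : ℕ := (n - 3).choose (nA - 3) with hN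
  -- Step A: rewrite the inner triple sum with indicators over univ
  have stepA : ∀ A : Finset (Fin n),
      (∑ i ∈ A, ∑ j ∈ A \ {i}, ∑ s ∈ A \ {i, j}, x i * y j * z s)
      = ∑ i, ∑ j ∈ univ \ {i}, ∑ s ∈ univ \ {i, j},
          (if i ∈ A then (1:ℝ) else 0) * ((if j ∈ A then (1:ℝ) else 0) *
            ((if s ∈ A then (1:ℝ) else 0) * (x i * y j * z s))) := by
    intro A
    have L1 : ∀ i j : Fin n, (∑ s ∈ A \ {i, j}, x i * y j * z s)
        = ∑ s ∈ univ \ {i, j}, (if s ∈ A then (1:ℝ) else 0) * (x i * y j * z s) := by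
      intro i j
      rw [show (A \ {i, j}) = (univ \ {i, j}) ∩ A by ext a; simp [and_comm],
        ← Finset.sum_ite_mem]
      exact Finset.sum_congr rfl fun s _ => by split_ifs <;> ring
    have L2 : ∀ i : Fin n, (∑ j ∈ A \ {i}, ∑ s ∈ A \ {i, j}, x i * y j * z s)
        = ∑ j ∈ univ \ {i}, (if j ∈ A then (1:ℝ) else 0) *
            ∑ s ∈ univ \ {i, j}, (if s ∈ A then (1:ℝ) else 0) * (x i * y j * z s) := by
      intro i
      rw [show (A \ {i}) = (univ \ {i}) ∩ A by ext a; simp [and_comm], ← Finset.sum_ite_mem]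
      refine Finset.sum_congr rfl fun j _ => ?_
      split_ifs with h
      · rw [one_mul, L1]
      · rw [zero_mul]
    have L3 : (∑ i ∈ A, ∑ j ∈ A \ {i}, ∑ s ∈ A \ {i, j}, x i * y j * z s)
        = ∑ i, (if i ∈ A then (1:ℝ) else 0) *
            ∑ j ∈ univ \ {i}, (if j ∈ A then (1:ℝ) else 0) *
              ∑ s ∈ univ \ {i, j}, (if s ∈ A then (1:ℝ) else 0) * (x i * y j * z s) := by
      symm
      calc (∑ i, (if i ∈ A then (1:ℝ) else 0) *
            ∑ j ∈ univ \ {i}, (if j ∈ A then (1:ℝ) else 0) *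
              ∑ s ∈ univ \ {i, j}, (if s ∈ A then (1:ℝ) else 0) * (x i * y j * z s))
          = ∑ i, (if i ∈ A then (∑ j ∈ univ \ {i}, (if j ∈ A then (1:ℝ) else 0) *
              ∑ s ∈ univ \ {i, j}, (if s ∈ A then (1:ℝ) else 0) * (x i * y j * z s)) else 0) :=
            Finset.sum_congr rfl fun i _ => by split_ifs <;> ring
        _ = ∑ i ∈ univ ∩ A, (∑ j ∈ univ \ {i}, (if j ∈ A then (1:ℝ) else 0) *
              ∑ s ∈ univ \ {i, j}, (if s ∈ A then (1:ℝ) else 0) * (x i * y j * z s)) :=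
            Finset.sum_ite_mem _ _ _
        _ = ∑ i ∈ A, (∑ j ∈ univ \ {i}, (if j ∈ A then (1:ℝ) else 0) *
              ∑ s ∈ univ \ {i, j}, (if s ∈ A then (1:ℝ) else 0) * (x i * y j * z s)) := by
            rw [Finset.univ_inter]
        _ = ∑ i ∈ A, ∑ j ∈ A \ {i}, ∑ s ∈ A \ {i, j}, x i * y j * z s :=
            Finset.sum_congr rfl fun i _ => (L2 i).symm
    rw [L3]
    simp only [Finset.mul_sum]
  -- Step B: swap sums and count
  have stepB : (∑ A ∈ P, ∑ i ∈ A, ∑ j ∈ A \ {i}, ∑ s ∈ A \ {i, j}, x i * y j * z s)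
      = (N : ℝ) * ∑ i, ∑ j ∈ univ \ {i}, ∑ s ∈ univ \ {i, j}, x i * y j * z s := by
    calc (∑ A ∈ P, ∑ i ∈ A, ∑ j ∈ A \ {i}, ∑ s ∈ A \ {i, j}, x i * y j * z s)
        = ∑ A ∈ P, ∑ i, ∑ j ∈ univ \ {i}, ∑ s ∈ univ \ {i, j},
            (if i ∈ A then (1:ℝ) else 0) * ((if j ∈ A then (1:ℝ) else 0) *
              ((if s ∈ A then (1:ℝ) else 0) * (x i * y j * z s))) :=
          Finset.sum_congr rfl fun A _ => stepA A
      _ = ∑ i, ∑ j ∈ univ \ {i}, ∑ s ∈ univ \ {i, j}, (N : ℝ) * (x i * y j * z s) := by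
          rw [Finset.sum_comm]
          refine Finset.sum_congr rfl fun i _ => ?_
          rw [Finset.sum_comm]
          refine Finset.sum_congr rfl fun j hj => ?_
          rw [Finset.sum_comm]
          refine Finset.sum_congr rfl fun s hs => ?_
          have hji : j ≠ i := by simpa using (Finset.mem_sdiff.mp hj).2
          have hsij : s ≠ i ∧ s ≠ j := by
            have := (Finset.mem_sdiff.mp hs).2
            simp only [Finset.mem_insert, Finset.mem_singleton] at this
            tauto
          have hcard3 : ({i, j, s} : Finset (Fin n)).card = 3 := by
            rw [Finset.card_insert_of_notMem (by simp [hji.symm, hsij.1.symm]),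
              Finset.card_insert_of_notMem (by simp [hsij.2.symm]), Finset.card_singleton]
          have hrw : ∀ A : Finset (Fin n),
              (if i ∈ A then (1:ℝ) else 0) * ((if j ∈ A then (1:ℝ) else 0) *
                ((if s ∈ A then (1:ℝ) else 0) * (x i * y j * z s)))
              = if ({i, j, s} : Finset (Fin n)) ⊆ A then x i * y j * z s else 0 := by
            intro A
            by_cases hi : i ∈ A <;> by_cases hjA : j ∈ A <;> by_cases hsA : s ∈ A <;>
              simp [Finset.insert_subset_iff, hi, hjA, hsA]
          simp only [hrw]
          rw [← Finset.sum_filter, Finset.sum_const, nsmul_eq_mul]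
          congr 1
          rw [count_subsets n nA _ (by rw [hcard3]; omega), hcard3]
      _ = (N : ℝ) * ∑ i, ∑ j ∈ univ \ {i}, ∑ s ∈ univ \ {i, j}, x i * y j * z s := by
          simp only [← Finset.mul_sum]
  -- Step C: the full-population sum equals 2∑ x y z
  have stepC : (∑ i, ∑ j ∈ univ \ {i}, ∑ s ∈ univ \ ({i, j} : Finset (Fin n)),
      x i * y j * z s) = 2 * ∑ i, x i * y i * z i := by
    have hs : ∀ i j : Fin n, j ≠ i →
        (∑ s ∈ univ \ ({i, j} : Finset (Fin n)), x i * y j * z s)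
          = x i * y j * (-(z i) - z j) := by
      intro i j hji
      have : (∑ s ∈ univ \ ({i, j} : Finset (Fin n)), x i * y j * z s)
          = x i * y j * ∑ s ∈ univ \ ({i, j} : Finset (Fin n)), z s := by
        rw [Finset.mul_sum]
      rw [this, Finset.sum_sdiff_eq_sub (Finset.subset_univ _), hz,
        Finset.sum_pair (Ne.symm hji)]
      ring
    have hj : ∀ i : Fin n, (∑ j ∈ univ \ {i}, x i * y j * (-(z i) - z j))
        = 2 * (x i * y i * z i) - x i * ∑ k, y k * z k := by
      intro i
      have e1 : (∑ j ∈ univ \ {i}, y j) = - y i := by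
        rw [Finset.sum_sdiff_eq_sub (Finset.subset_univ _), hy, Finset.sum_singleton]; ring
      have e2 : (∑ j ∈ univ \ {i}, y j * z j) = (∑ k, y k * z k) - y i * z i := by
        rw [Finset.sum_sdiff_eq_sub (Finset.subset_univ _), Finset.sum_singleton]
      calc (∑ j ∈ univ \ {i}, x i * y j * (-(z i) - z j))
          = ∑ j ∈ univ \ {i}, ((x i * (-(z i))) * y j + (-(x i)) * (y j * z j)) :=
            Finset.sum_congr rfl fun j _ => by ring
        _ = (x i * (-(z i))) * (∑ j ∈ univ \ {i}, y j)
              + (-(x i)) * (∑ j ∈ univ \ {i}, y j * z j) := by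
            rw [Finset.sum_add_distrib, ← Finset.mul_sum, ← Finset.mul_sum]
        _ = _ := by rw [e1, e2]; ring
    calc (∑ i, ∑ j ∈ univ \ {i}, ∑ s ∈ univ \ ({i, j} : Finset (Fin n)), x i * y j * z s)
        = ∑ i, ∑ j ∈ univ \ {i}, x i * y j * (-(z i) - z j) := by
          refine Finset.sum_congr rfl fun i _ => Finset.sum_congr rfl fun j hjm => ?_
          exact hs i j (by simpa using (Finset.mem_sdiff.mp hjm).2)
      _ = ∑ i, (2 * (x i * y i * z i) - x i * ∑ k, y k * z k) :=
          Finset.sum_congr rfl fun i _ => hj i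
      _ = 2 * ∑ i, x i * y i * z i := by
          rw [Finset.sum_sub_distrib, ← Finset.sum_mul, hx, ← Finset.mul_sum]
          ring
  rw [stepB, stepC]
  -- Step D: numeric computation
  obtain ⟨a, rfl⟩ : ∃ a, n = a + 3 := ⟨n - 3, by omega⟩
  obtain ⟨b, rfl⟩ : ∃ b, nA = b + 3 := ⟨nA - 3, by omega⟩
  have hNval : N = a.choose b := by simp [hN]
  have hPcard : P.card = (a + 3).choose (b + 3) := by
    rw [hP, Finset.card_powersetCard, Finset.card_univ, Fintype.card_fin]
  have hCpos : 0 < (a + 3).choose (b + 3) := Nat.choose_pos (by omega)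
  have key : ((a+3).choose (b+3) : ℝ) * (((b:ℝ)+3)*((b:ℝ)+2)*((b:ℝ)+1))
      = (a.choose b : ℝ) * (((a:ℝ)+3)*((a:ℝ)+2)*((a:ℝ)+1)) := by
    exact_mod_cast choose_id a b
  rw [hNval, hPcard]
  have hC0 : ((a + 3).choose (b + 3) : ℝ) ≠ 0 := by positivity
  push_cast
  have ha1 : ((a:ℝ) + 3) - 1 = (a:ℝ) + 2 := by ring
  have ha2 : ((a:ℝ) + 3) - 2 = (a:ℝ) + 1 := by ring
  have hb1 : ((b:ℝ) + 3) - 1 = (b:ℝ) + 2 := by ring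
  have hb2 : ((b:ℝ) + 3) - 2 = (b:ℝ) + 1 := by ring
  rw [ha1, ha2, hb1, hb2]
  have hden : ((a:ℝ)+3) * ((a:ℝ)+2) * ((a:ℝ)+1) ≠ 0 := by positivity
  field_simp
  linear_combination (-(∑ i, x i * y i * z i)) * key
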